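/- For all integers 1 ≤ k ≤ n there exist vectors v_1, …, v_n ∈ ℂ^k such that {v_1, …, v_k} does not span ℂ^k, but every other k-element subset {v_{i_1}, …, v_{i_k}} (with {i_1,…,i_k} ≠ {1,…,k}) spans ℂ^k. -/

import Mathlib

open MvPolynomial

/-- A polynomial vanishes identically on a set of points of affine space. -/
def vanishesOn {n : ℕ} (f : MvPolynomial (Fin n) ℂ) (S : Set (Fin n → ℂ)) : Prop :=
  ∀ v ∈ S, MvPolynomial.eval v f = 0

/-- Zariski closure of a set of points: the zero locus of its vanishing ideal. -/
def zclosure {n : ℕ} (S : Set (Fin n → ℂ)) : Set (Fin n → ℂ) :=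
  {v | ∀ f : MvPolynomial (Fin n) ℂ, vanishesOn f S → MvPolynomial.eval v f = 0}

/-- Zariski-irreducibility: nonempty and the vanishing ideal is prime. -/
def ZIrred {n : ℕ} (S : Set (Fin n → ℂ)) : Prop :=
  S.Nonempty ∧ ∀ f g : MvPolynomial (Fin n) ℂ,
    vanishesOn (f * g) S → vanishesOn f S ∨ vanishesOn g S

/-- Krull dimension of (the Zariski closure of) a set, as the order-theoretic
Krull dimension of chains of irreducible Zariski-closed subsets of it. -/
noncomputable def zdim {n : ℕ} (S : Set (Fin n → ℂ)) : WithBot ℕ∞ :=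
  Order.krullDim {T : Set (Fin n → ℂ) // zclosure T = T ∧ ZIrred T ∧ T ⊆ zclosure S}

/-- Projective equality of coordinate vectors: equality up to a nonzero scalar. -/
def ProjEq {n : ℕ} (v w : Fin n → ℂ) : Prop :=
  ∃ c : ℂ, c ≠ 0 ∧ w = c • v

/-- The set of (representatives of) Hadamard products of `m` points of `X`. -/
def hprodSet {n : ℕ} (X : Set (Fin n → ℂ)) (m : ℕ) : Set (Fin n → ℂ) :=
  {p | ∃ f : Fin m → (Fin n → ℂ), (∀ i, f i ∈ X) ∧ ProjEq (∏ i, f i) p}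

/-- The `m`-th Hadamard power of `X`: the Zariski closure of the set of Hadamard
products of `m` points of `X`. -/
def hpow {n : ℕ} (X : Set (Fin n → ℂ)) (m : ℕ) : Set (Fin n → ℂ) :=
  zclosure (hprodSet X m)

/-- `p` is an (actual) Hadamard product of `m` points of `X`. -/
def HadDecomp {n : ℕ} (X : Set (Fin n → ℂ)) (m : ℕ) (p : Fin n → ℂ) : Prop :=
  p ∈ hprodSet X m

/-- The Hadamard-`X`-rank of `p` is at most `r` (and finite, in particular). -/
def HrkLe {n : ℕ} (X : Set (Fin n → ℂ)) (r : ℕ) (p : Fin n → ℂ) : Prop :=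
  ∃ m, 1 ≤ m ∧ m ≤ r ∧ HadDecomp X m p

/-- The Hadamard-`X`-rank of `p` is exactly `r`. -/
def HrkEq {n : ℕ} (X : Set (Fin n → ℂ)) (r : ℕ) (p : Fin n → ℂ) : Prop :=
  HadDecomp X r p ∧ ∀ m, 1 ≤ m → m < r → ¬ HadDecomp X m p

/-- The Hadamard-`X`-rank of `p` is finite. -/
def HrkFin {n : ℕ} (X : Set (Fin n → ℂ)) (p : Fin n → ℂ) : Prop :=
  ∃ m, 1 ≤ m ∧ HadDecomp X m p

/-- `X ⊂ ℙ^{n-1}` is strongly concise: for each coordinate `i` there is a point of `X`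
whose `i`-th coordinate vanishes and all other coordinates are nonzero. -/
def StronglyConcise {n : ℕ} (X : Set (Fin n → ℂ)) : Prop :=
  ∀ i : Fin n, ∃ v ∈ X, v i = 0 ∧ ∀ j ≠ i, v j ≠ 0

open Submodule

private lemma avoidance {E : Type*} [AddCommGroup E] [Module ℂ E]
    (S : Finset (Submodule ℂ E)) (hS : ∀ p ∈ S, p ≠ ⊤) :
    ∃ x : E, ∀ p ∈ S, x ∉ p := by
  have h : ⋃ p ∈ S, (p : Set E) ≠ Set.univ :=
    Subspace.biUnion_ne_univ_of_top_notMem (fun hT => hS ⊤ hT rfl)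
  rw [Set.ne_univ_iff_exists_notMem] at h
  obtain ⟨x, hx⟩ := h
  exact ⟨x, fun p hp hxp => hx (Set.mem_biUnion hp hxp)⟩

private lemma card_filter_lt' (k n : ℕ) (hkn : k ≤ n) :
    ((Finset.univ : Finset (Fin n)).filter (fun j : Fin n => (j : ℕ) < k)).card = k := by
  refine Finset.card_eq_of_bijective (fun i hi => (⟨i, lt_of_lt_of_le hi hkn⟩ : Fin n)) ?_ ?_ ?_
  · intro a ha
    rw [Finset.mem_filter] at ha
    exact ⟨a, ha.2, rfl⟩
  · intro i hi
    simp [Finset.mem_filter, hi]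
  · intro i j hi hj hij
    simpa [Fin.ext_iff] using hij

private lemma coe_ne_firstk {k n : ℕ} (hkn : k ≤ n) {s : Finset (Fin n)} (hcard : s.card < k) :
    (↑s : Set (Fin n)) ≠ {i : Fin n | (i : ℕ) < k} := by
  intro h
  have h2 : (↑s : Set (Fin n)) =
      ↑((Finset.univ : Finset (Fin n)).filter (fun j : Fin n => (j : ℕ) < k)) := by
    rw [h]; ext x; simp
  have := Finset.coe_injective h2
  rw [this, card_filter_lt' k n hkn] at hcard
  omega

private lemma span_finset_image_finrank {k n : ℕ} (v : Fin n → (Fin k → ℂ)) (t : Finset (Fin n)) :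
    Module.finrank ℂ ↥(Submodule.span ℂ (v '' ↑t)) ≤ t.card := by
  have h1 : v '' ↑t = ↑(t.image v) := by rw [Finset.coe_image]
  rw [h1]
  exact le_trans (finrank_span_finset_le_card (t.image v)) (Finset.card_image_le)

private lemma main_rec (k n : ℕ) (hk : 1 ≤ k) (hkn : k ≤ n) : ∀ m : ℕ,
    ∃ v : Fin n → (Fin k → ℂ),
      (∀ j : Fin n, (j : ℕ) < m → (j : ℕ) < k → v j ⟨0, hk⟩ = 0) ∧
      (∀ s : Finset (Fin n), (∀ j ∈ s, (j : ℕ) < m) → s.card ≤ k →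
        (↑s : Set (Fin n)) ≠ {i : Fin n | (i : ℕ) < k} →
        LinearIndependent ℂ (fun x : ↥(↑s : Set (Fin n)) => v x)) := by
  intro m
  induction m with
  | zero =>
    refine ⟨fun _ => 0, fun j hj => by omega, fun s hs hcard hne => ?_⟩
    haveI : IsEmpty ↥(↑s : Set (Fin n)) :=
      ⟨fun x => absurd (hs x (Finset.mem_coe.mp x.2)) (by omega)⟩
    exact linearIndependent_empty_type
  | succ m ih =>
    obtain ⟨v, hv1, hv2⟩ := ih
    by_cases hm : m < n
    case neg =>
      refine ⟨v, ?_, ?_⟩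
      · intro j hj hjk
        exact hv1 j (by have := j.isLt; omega) hjk
      · intro s hs hcard hne
        exact hv2 s (fun j hj => by have := j.isLt; omega) hcard hne
    case pos =>
    classical
    set i : Fin n := ⟨m, hm⟩ with hi_def
    set P : Finset (Finset (Fin n)) :=
      ((Finset.univ.filter (fun j : Fin n => (j : ℕ) < m)).powerset).filter
        (fun t => t.card ≤ k - 1 ∧ (↑(insert i t) : Set (Fin n)) ≠ {j : Fin n | (j : ℕ) < k}) with hP_def
    -- properties of members of P
    have hPmem : ∀ t ∈ P, (∀ j ∈ t, (j : ℕ) < m) ∧ t.card ≤ k - 1 ∧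
        (↑(insert i t) : Set (Fin n)) ≠ {j : Fin n | (j : ℕ) < k} := by
      intro t ht
      rw [hP_def, Finset.mem_filter, Finset.mem_powerset] at ht
      exact ⟨fun j hj => (Finset.mem_filter.mp (ht.1 hj)).2, ht.2.1, ht.2.2⟩
    -- choose the new vector w
    have hex : ∃ w : Fin k → ℂ, (m < k → w ⟨0, hk⟩ = 0) ∧
        ∀ t ∈ P, w ∉ Submodule.span ℂ (v '' ↑t) := by
      by_cases hmk : m < k
      · -- work inside the hyperplane H
        set i₀ : Fin k := ⟨0, hk⟩ with hi₀
        set H : Submodule ℂ (Fin k → ℂ) := LinearMap.ker (LinearMap.proj (R := ℂ) i₀) with hH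
        have hHrank : Module.finrank ℂ ↥H = k - 1 := by
          have hr := LinearMap.finrank_range_add_finrank_ker
            (LinearMap.proj (R := ℂ) (φ := fun _ : Fin k => ℂ) i₀)
          have hrange : LinearMap.range (LinearMap.proj (R := ℂ) (φ := fun _ : Fin k => ℂ) i₀) = ⊤ :=
            LinearMap.range_eq_top.mpr (fun c => ⟨Pi.single i₀ c, by simp⟩)
          rw [hrange, finrank_top, Module.finrank_self, Module.finrank_fin_fun, ← hH] at hr
          omega
        -- card bound: members of P have card ≤ k - 2 in this case
        have hcard2 : ∀ t ∈ P, t.card + 2 ≤ k := by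
          intro t ht
          obtain ⟨htm, htc, htne⟩ := hPmem t ht
          by_contra hc
      -- then t.card = k - 1, and m = k - 1, and t is everything below m
          have htc' : t.card = k - 1 := by omega
          have htsub : t ⊆ Finset.univ.filter (fun j : Fin n => (j : ℕ) < m) := by
            intro j hj; exact Finset.mem_filter.mpr ⟨Finset.mem_univ _, htm j hj⟩
          have hcf : (Finset.univ.filter (fun j : Fin n => (j : ℕ) < m)).card = m :=
            card_filter_lt' m n (le_of_lt hm)
          have hmk1 : m = k - 1 := by
            have := Finset.card_le_card htsub
            omega
          have hteq : t = Finset.univ.filter (fun j : Fin n => (j : ℕ) < m) :=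
            Finset.eq_of_subset_of_card_le htsub (by omega)
          apply htne
          have hfin : insert i t = Finset.univ.filter (fun j : Fin n => (j : ℕ) < k) := by
            ext x
            simp only [Finset.mem_insert, hteq, Finset.mem_filter, Finset.mem_univ, true_and]
            constructor
            · rintro (rfl | hx)
              · rw [hi_def]; exact hmk
              · omega
            · intro hx
              by_cases hxm : (x : ℕ) < m
              · exact Or.inr hxm
              · refine Or.inl (Fin.ext ?_)
                rw [hi_def]
                show (x : ℕ) = m
                omega
          rw [hfin]
          ext x
          simp
        have hproper : ∀ t ∈ P, Submodule.comap H.subtype (Submodule.span ℂ (v '' ↑t)) ≠ ⊤ := by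
          intro t ht htop
          rw [Submodule.comap_subtype_eq_top] at htop
          have h1 := Submodule.finrank_mono htop
          have h2 := span_finset_image_finrank v t
          have h3 := hcard2 t ht
          rw [hHrank] at h1
          omega
        obtain ⟨x, hx⟩ := avoidance (P.image
            (fun t : Finset (Fin n) => Submodule.comap H.subtype (Submodule.span ℂ (v '' ↑t))))
          (by
            intro p hp
            rw [Finset.mem_image] at hp
            obtain ⟨t, ht, rfl⟩ := hp
            exact hproper t ht)
        refine ⟨(x : Fin k → ℂ), fun _ => ?_, fun t ht hsp => ?_⟩
        · have := x.2
          rw [LinearMap.mem_ker] at this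
          exact this
        · exact hx _ (Finset.mem_image_of_mem _ ht) hsp
      · -- m ≥ k : any vector avoiding the spans works
        have hproper : ∀ t ∈ P, Submodule.span ℂ (v '' ↑t) ≠ ⊤ := by
          intro t ht htop
          have h2 := span_finset_image_finrank v t
          have h4 : Module.finrank ℂ ↥(⊤ : Submodule ℂ (Fin k → ℂ)) = k := by
            rw [finrank_top, Module.finrank_fin_fun]
          rw [htop, h4] at h2
          have h3 := (hPmem t ht).2.1
          have hfalse : k ≤ k - 1 := le_trans h2 h3
          omega
        obtain ⟨w, hw⟩ := avoidance (P.image (fun t : Finset (Fin n) => Submodule.span ℂ (v '' ↑t)))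
          (by
            intro p hp
            rw [Finset.mem_image] at hp
            obtain ⟨t, ht, rfl⟩ := hp
            exact hproper t ht)
        exact ⟨w, fun hc => absurd hc hmk, fun t ht hsp =>
          hw _ (Finset.mem_image_of_mem _ ht) hsp⟩
    obtain ⟨w, hw1, hw2⟩ := hex
    set v' : Fin n → (Fin k → ℂ) := Function.update v i w with hv'_def
    have hvv' : ∀ j : Fin n, (j : ℕ) < m → v' j = v j := by
      intro j hj
      apply Function.update_of_ne
      intro hji
      rw [hji] at hj
      simp [hi_def] at hj
    have hv'i : v' i = w := Function.update_self i w v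
    refine ⟨v', ?_, ?_⟩
    · intro j hj hjk
      by_cases hjm : (j : ℕ) < m
      · rw [hvv' j hjm]; exact hv1 j hjm hjk
      · have hji : j = i := Fin.ext (by simp [hi_def]; omega)
        rw [hji, hv'i]
        exact hw1 (by omega)
    · intro s hs hcard hne
      by_cases his : i ∈ s
      · set t := s.erase i with ht_def
        have hts : ∀ j ∈ t, (j : ℕ) < m := by
          intro j hj
          rw [ht_def, Finset.mem_erase] at hj
          have h1 := hs j hj.2
          have h2 : (j : ℕ) ≠ m := fun hc => hj.1 (Fin.ext (by simp [hi_def, hc]))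
          omega
        have htP : t ∈ P := by
          rw [hP_def, Finset.mem_filter, Finset.mem_powerset]
          refine ⟨fun j hj => Finset.mem_filter.mpr ⟨Finset.mem_univ _, hts j hj⟩, ?_, ?_⟩
          · have hce := Finset.card_erase_of_mem his
            rw [← ht_def] at hce
            omega
          · rw [ht_def, Finset.insert_erase his]
            exact hne
        have hw := hw2 t htP
        have ht_ind := hv2 t hts (by have := (hPmem t htP).2.1; omega)
          (coe_ne_firstk hkn (by have := (hPmem t htP).2.1; omega))
        have hi_t : i ∉ (↑t : Set (Fin n)) := by
          rw [ht_def]; simp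
        have hs_eq : (↑s : Set (Fin n)) = insert i ↑t := by
          rw [ht_def, ← Finset.coe_insert, Finset.insert_erase his]
        rw [hs_eq]
        refine (linearIndepOn_insert (f := v') hi_t).mpr ⟨?_, ?_⟩
        · have hfe : (fun x : ↥(↑t : Set (Fin n)) => v' ↑x) =
              (fun x : ↥(↑t : Set (Fin n)) => v ↑x) :=
            funext fun x => hvv' _ (hts x (Finset.mem_coe.mp x.2))
          show LinearIndependent ℂ (fun x : ↥(↑t : Set (Fin n)) => v' ↑x)
          rw [hfe]
          exact ht_ind
        · have him : v' '' ↑t = v '' ↑t :=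
            Set.image_congr (fun x hx => hvv' x (hts x (Finset.mem_coe.mp hx)))
          rw [hv'i, him]
          exact hw
      · have hsm : ∀ j ∈ s, (j : ℕ) < m := by
          intro j hj
          have h1 := hs j hj
          have h2 : (j : ℕ) ≠ m := fun hc => his (by rwa [show j = i from Fin.ext (by simp [hi_def, hc])] at hj)
          omega
        have hfe : (fun x : ↥(↑s : Set (Fin n)) => v' ↑x) =
            (fun x : ↥(↑s : Set (Fin n)) => v ↑x) :=
          funext fun x => hvv' _ (hsm x (Finset.mem_coe.mp x.2))
        rw [hfe]
        exact hv2 s hsm hcard hne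

/-- for `1 ≤ k ≤ n` there are vectors `v 1, …, v n` in `ℂ^k` such that the
first `k` of them do not span `ℂ^k`, but every other `k`-element subset spans `ℂ^k`. -/
theorem stmt1 (k n : ℕ) (hk : 1 ≤ k) (hkn : k ≤ n) :
    ∃ v : Fin n → (Fin k → ℂ),
      Submodule.span ℂ (v '' {i | (i : ℕ) < k}) ≠ ⊤ ∧
      ∀ s : Finset (Fin n), s.card = k → (↑s : Set (Fin n)) ≠ {i : Fin n | (i : ℕ) < k} →
        Submodule.span ℂ (v '' ↑s) = ⊤ := by
  obtain ⟨v, hv1, hv2⟩ := main_rec k n hk hkn n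
  refine ⟨v, ?_, ?_⟩
  · intro htop
    set i₀ : Fin k := ⟨0, hk⟩ with hi₀
    have hle : Submodule.span ℂ (v '' {i : Fin n | (i : ℕ) < k}) ≤
        LinearMap.ker (LinearMap.proj (R := ℂ) (φ := fun _ : Fin k => ℂ) i₀) := by
      rw [Submodule.span_le]
      rintro x ⟨j, hj, rfl⟩
      rw [SetLike.mem_coe, LinearMap.mem_ker]
      exact hv1 j j.isLt hj
    rw [htop, top_le_iff] at hle
    have h1 : (Pi.single i₀ 1 : Fin k → ℂ) ∈
        LinearMap.ker (LinearMap.proj (R := ℂ) (φ := fun _ : Fin k => ℂ) i₀) := by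
      rw [hle]; trivial
    rw [LinearMap.mem_ker] at h1
    simp at h1
  · intro s hcard hne
    have hind := hv2 s (fun j _ => j.isLt) (le_of_eq hcard) hne
    have hne' : (↑s : Set (Fin n)).Nonempty := by
      rw [Finset.coe_nonempty, ← Finset.card_pos, hcard]; omega
    haveI : Nonempty ↥(↑s : Set (Fin n)) := hne'.to_subtype
    rw [Set.image_eq_range]
    refine hind.span_eq_top_of_card_eq_finrank ?_
    rw [Module.finrank_fin_fun]
    rw [← hcard]
    exact Fintype.card_coe s
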